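/- Let (X, ρ) be a weighted space and let (P_t)_{t≥0} be a generalized Feller semigroup on 𝓑^ρ(X) with ‖P_t‖_{L(𝓑^ρ(X))} ≤ M exp(ωt) for some M ≥ 1 and ω ∈ ℝ, which is of transport type: P_t f = f ∘ ψ_t for a semiflow of continuous maps ψ_t : X → X (ψ_0 = id, ψ_{t+s} = ψ_s ∘ ψ_t). Define ρ̃(x) := sup_{t≥0} exp(−ωt) ρ(ψ_t(x)). Then: (i) ρ̃ is an admissible weight function on X; (ii) ρ ≤ ρ̃ ≤ M ρ, so the norm ‖f‖_{ρ̃} := sup_x |f(x)|/ρ̃(x) is equivalent to ‖·‖_ρ on 𝓑^ρ(X); (iii) ‖P_t f‖_{ρ̃} ≤ exp(ωt) ‖f‖_{ρ̃} for all t ≥ 0 and f ∈ 𝓑^ρ(X); and (iv) ρ̃(ψ_t(x)) ≤ exp(ωt) ρ̃(x) for all x ∈ X and t ≥ 0 (i.e. P_t ρ̃ ≤ exp(ωt) ρ̃). -/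

import Mathlib

open scoped ENNReal NNReal
open Filter Set MeasureTheory TopologicalSpace

noncomputable section

/-- An admissible weight function on a topological space: strictly positive with compact
and separable sublevel sets. -/
structure AdmissibleWeight {X : Type*} [TopologicalSpace X] (ρ : X → ℝ) : Prop where
  pos : ∀ x, 0 < ρ x
  isCompact_sublevel : ∀ R : ℝ, 0 < R → IsCompact {x | ρ x ≤ R}
  isSeparable_sublevel : ∀ R : ℝ, 0 < R → TopologicalSpace.IsSeparable {x | ρ x ≤ R}

/-- The Banach space of bounded real-valued functions on `X`, with the sup norm. -/
abbrev BddFun (X : Type*) := lp (fun _ : X => ℝ) ∞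

/-- Bounded continuous functions, divided by the weight `ρ`.  Under the isometric
identification `f ↦ f / ρ` of `B^ρ(X)` with bounded functions, this is the image of
`C_b(X)`. -/
def preCalB {X : Type*} [TopologicalSpace X] (ρ : X → ℝ) : Submodule ℝ (BddFun X) where
  carrier := {g | ∃ f : X → ℝ, Continuous f ∧ (∃ C, ∀ x, |f x| ≤ C) ∧ ∀ x, g x = f x / ρ x}
  add_mem' := by
    rintro g₁ g₂ ⟨f₁, hc₁, ⟨C₁, hb₁⟩, h₁⟩ ⟨f₂, hc₂, ⟨C₂, hb₂⟩, h₂⟩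
    refine ⟨f₁ + f₂, hc₁.add hc₂, ⟨C₁ + C₂, fun x => ?_⟩, fun x => ?_⟩
    · calc |(f₁ + f₂) x| ≤ |f₁ x| + |f₂ x| := abs_add_le _ _
        _ ≤ C₁ + C₂ := add_le_add (hb₁ x) (hb₂ x)
    · have : (g₁ + g₂ : BddFun X) x = g₁ x + g₂ x := by
        rw [lp.coeFn_add]; rfl
      rw [this, h₁ x, h₂ x]
      simp [Pi.add_apply, add_div]
  zero_mem' := ⟨0, continuous_const, ⟨0, by simp⟩, fun x => by simp⟩
  smul_mem' := by
    rintro c g ⟨f, hc, ⟨C, hb⟩, h⟩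
    refine ⟨fun x => c * f x, continuous_const.mul hc, ⟨|c| * C, fun x => ?_⟩, fun x => ?_⟩
    · rw [abs_mul]
      exact mul_le_mul_of_nonneg_left (hb x) (abs_nonneg c)
    · have : (c • g : BddFun X) x = c * g x := by
        rw [lp.coeFn_smul]; rfl
      rw [this, h x, mul_div_assoc]

/-- `𝓑^ρ(X)`: the closure of (the image of) the bounded continuous functions in `B^ρ(X)`,
realized under the isometric identification `f ↦ f / ρ` as a closed subspace of the bounded
functions on `X`. -/
def calB {X : Type*} [TopologicalSpace X] (ρ : X → ℝ) : Submodule ℝ (BddFun X) :=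
  (preCalB ρ).topologicalClosure

variable {X : Type*} [TopologicalSpace X] {ρ : X → ℝ}

/-- The value at `x` of (the `f/ρ` representation of) an element of `𝓑^ρ(X)`;
this equals `ρ(x)⁻¹ f(x)`. -/
def scaledApp (f : calB ρ) (x : X) : ℝ := (f : BddFun X) x

/-- The true value `f(x)` of an element of `𝓑^ρ(X)`. -/
def valOf (f : calB ρ) (x : X) : ℝ := ρ x * scaledApp f x

/-- A function `F : X → ℝ` belongs to `𝓑^ρ(X)`. -/
def MemCalB {X : Type*} [TopologicalSpace X] (ρ : X → ℝ) (F : X → ℝ) : Prop :=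
  ∃ g : BddFun X, g ∈ calB ρ ∧ ∀ x, g x = F x / ρ x

/-- A generalized Feller semigroup on `𝓑^ρ(X)`. -/
structure IsGenFellerSemigroup {X : Type*} [TopologicalSpace X] (ρ : X → ℝ)
    (P : ℝ≥0 → ((calB ρ) →L[ℝ] (calB ρ))) : Prop where
  map_zero : P 0 = ContinuousLinearMap.id ℝ (calB ρ)
  semigroup : ∀ s t : ℝ≥0, P (s + t) = (P s).comp (P t)
  tendsto_apply : ∀ (f : calB ρ) (x : X),
    Tendsto (fun t : ℝ≥0 => valOf (P t f) x) (nhds 0) (nhds (valOf f x))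
  norm_bound : ∃ (C : ℝ) (ε : ℝ≥0), 0 < ε ∧ ∀ t ≤ ε, ‖P t‖ ≤ C
  pos : ∀ (t : ℝ≥0) (f : calB ρ), (∀ x, 0 ≤ valOf f x) → ∀ x, 0 ≤ valOf (P t f) x


universe u

/-- The renormalized weight `ρ̃(x) = sup_{t ≥ 0} exp(-ωt) ρ(ψ_t(x))`. -/
def tildeWeight {X : Type u} (ρ : X → ℝ) (ψ : ℝ≥0 → X → X) (w : ℝ) (x : X) : ℝ :=
  ⨆ t : ℝ≥0, Real.exp (-(w * t)) * ρ (ψ t x)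

/-- Key growth estimate: the operator norm bound forces `ρ(ψ_t x) ≤ M e^{ωt} ρ(x)`. -/
lemma key_growth {X : Type u} [TopologicalSpace X] [T2Space X] [CompletelyRegularSpace X]
    {ρ : X → ℝ} (hρ : AdmissibleWeight ρ)
    (ψ : ℝ≥0 → X → X)
    (P : ℝ≥0 → (calB ρ) →L[ℝ] (calB ρ))
    (htrans : ∀ (t : ℝ≥0) (f : calB ρ) (x : X), valOf (P t f) x = valOf f (ψ t x))
    (M w : ℝ) (hM : 1 ≤ M)
    (hgb : ∀ t : ℝ≥0, ‖P t‖ ≤ M * Real.exp (w * t)) :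
    ∀ (t : ℝ≥0) (x : X), ρ (ψ t x) ≤ M * Real.exp (w * t) * ρ x := by
  intro t x
  set y := ψ t x with hy
  set B := M * Real.exp (w * t) * ρ x with hB
  have hMpos : (0:ℝ) < M := lt_of_lt_of_le one_pos hM
  have hBpos : 0 < B := mul_pos (mul_pos hMpos (Real.exp_pos _)) (hρ.pos x)
  refine le_of_forall_pos_le_add fun ε hε => ?_
  rcases le_or_gt (ρ y) ε with h | h
  · linarith
  · set c := ρ y - ε with hc
    have hcpos : 0 < c := by simp only [hc]; linarith
    have hK : IsClosed {z | ρ z ≤ c} := (hρ.isCompact_sublevel c hcpos).isClosed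
    have hyK : y ∉ {z | ρ z ≤ c} := by
      simp only [mem_setOf_eq, not_le, hc]; linarith
    obtain ⟨u, hu, huy, huK⟩ := CompletelyRegularSpace.completely_regular y _ hK hyK
    set f₀ : X → ℝ := fun z => c * (1 - (u z : ℝ)) with hf₀
    have hf₀cont : Continuous f₀ :=
      continuous_const.mul (continuous_const.sub (continuous_subtype_val.comp hu))
    have hu01 : ∀ z, (0:ℝ) ≤ (u z : ℝ) ∧ (u z : ℝ) ≤ 1 := fun z => ⟨(u z).2.1, (u z).2.2⟩
    have hf₀nonneg : ∀ z, 0 ≤ f₀ z := fun z =>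
      mul_nonneg hcpos.le (by have := (hu01 z).2; linarith)
    have hf₀lec : ∀ z, f₀ z ≤ c := fun z => by
      have h1 := (hu01 z).1
      calc c * (1 - (u z : ℝ)) ≤ c * 1 := by nlinarith
        _ = c := mul_one c
    have hf₀leρ : ∀ z, f₀ z ≤ ρ z := by
      intro z
      rcases le_or_gt (ρ z) c with hz | hz
      · have : u z = 1 := huK hz
        simp only [hf₀, this]
        simpa using (hρ.pos z).le
      · exact le_trans (hf₀lec z) hz.le
    set g : X → ℝ := fun z => f₀ z / ρ z with hg
    have hg01 : ∀ z, 0 ≤ g z ∧ g z ≤ 1 := by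
      intro z
      constructor
      · exact div_nonneg (hf₀nonneg z) (hρ.pos z).le
      · rw [div_le_one (hρ.pos z)]; exact hf₀leρ z
    have hgmem : Memℓp g ∞ := by
      apply memℓp_infty
      refine ⟨1, ?_⟩
      rintro r ⟨z, rfl⟩
      simp only [Real.norm_eq_abs]
      rw [abs_le]
      exact ⟨by linarith [(hg01 z).1], (hg01 z).2⟩
    set G : BddFun X := ⟨g, hgmem⟩ with hG
    have hGapp : ∀ z, G z = g z := fun z => rfl
    have hGmem : G ∈ calB ρ := by
      apply Submodule.le_topologicalClosure
      exact ⟨f₀, hf₀cont, ⟨c, fun z => by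
        rw [abs_of_nonneg (hf₀nonneg z)]; exact hf₀lec z⟩, fun z => rfl⟩
    set F : calB ρ := ⟨G, hGmem⟩ with hF
    have hFnorm : ‖F‖ ≤ 1 := by
      show ‖G‖ ≤ 1
      apply lp.norm_le_of_forall_le zero_le_one
      intro z
      simp only [hGapp, Real.norm_eq_abs]
      rw [abs_le]
      exact ⟨by linarith [(hg01 z).1], (hg01 z).2⟩
    have hval : valOf (P t F) x = c := by
      rw [htrans t F x]
      show ρ y * scaledApp F y = c
      have h1 : scaledApp F y = g y := rfl
      rw [h1]
      have h2 : g y = c / ρ y := by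
        simp only [hg, hf₀, huy]
        norm_num
      rw [h2, mul_div_cancel₀ _ (ne_of_gt (hρ.pos y))]
    have hscaled : |scaledApp (P t F) x| ≤ ‖P t F‖ := by
      have h1 : ‖((P t F : calB ρ) : BddFun X) x‖ ≤ ‖((P t F : calB ρ) : BddFun X)‖ :=
        lp.norm_apply_le_norm ENNReal.top_ne_zero _ x
      rw [Real.norm_eq_abs] at h1
      exact h1
    have hPtF : ‖P t F‖ ≤ M * Real.exp (w * t) := by
      have h1 := (P t).le_opNorm F
      have h2 : ‖P t‖ * ‖F‖ ≤ (M * Real.exp (w * t)) * 1 :=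
        mul_le_mul (hgb t) hFnorm (norm_nonneg F)
          (mul_nonneg hMpos.le (Real.exp_pos _).le)
      linarith
    have : c ≤ B := by
      have h1 : c = ρ x * scaledApp (P t F) x := by
        rw [← hval]; rfl
      have h2 : c ≤ ρ x * |scaledApp (P t F) x| := by
        rw [h1]
        rcases le_or_gt 0 (scaledApp (P t F) x) with hs | hs
        · rw [abs_of_nonneg hs]
        · nlinarith [hρ.pos x]
      calc c ≤ ρ x * |scaledApp (P t F) x| := h2
        _ ≤ ρ x * ‖P t F‖ := mul_le_mul_of_nonneg_left hscaled (hρ.pos x).le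
        _ ≤ ρ x * (M * Real.exp (w * t)) := mul_le_mul_of_nonneg_left hPtF (hρ.pos x).le
        _ = B := by rw [hB]; ring
    simp only [hc] at this
    linarith

/-- **Renormalization of transport-type generalized Feller semigroups.**  If `P_t f = f ∘ ψ_t`
with `‖P_t‖ ≤ M exp(ωt)`, then `ρ̃ := sup_t exp(-ωt) (ρ ∘ ψ_t)` is an admissible weight,
`ρ ≤ ρ̃ ≤ M ρ` (so the `ρ̃`-norm is equivalent), `‖P_t f‖_{ρ̃} ≤ exp(ωt) ‖f‖_{ρ̃}` and
`P_t ρ̃ ≤ exp(ωt) ρ̃`. -/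
theorem transport_renormalized_weight
    {X : Type u} [TopologicalSpace X] [T2Space X] [CompletelyRegularSpace X]
    {ρ : X → ℝ} (hρ : AdmissibleWeight ρ)
    (ψ : ℝ≥0 → X → X) (hψc : ∀ t : ℝ≥0, Continuous (ψ t)) (hψ0 : ψ 0 = id)
    (hψsg : ∀ s t : ℝ≥0, ψ (s + t) = ψ s ∘ ψ t)
    (P : ℝ≥0 → (calB ρ) →L[ℝ] (calB ρ)) (hP : IsGenFellerSemigroup ρ P)
    (htrans : ∀ (t : ℝ≥0) (f : calB ρ) (x : X), valOf (P t f) x = valOf f (ψ t x))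
    (M w : ℝ) (hM : 1 ≤ M)
    (hgb : ∀ t : ℝ≥0, ‖P t‖ ≤ M * Real.exp (w * t)) :
    AdmissibleWeight (tildeWeight ρ ψ w) ∧
    (∀ x : X, ρ x ≤ tildeWeight ρ ψ w x ∧ tildeWeight ρ ψ w x ≤ M * ρ x) ∧
    (∀ (t : ℝ≥0) (f : calB ρ),
      (⨆ x : X, ENNReal.ofReal (|valOf (P t f) x| / tildeWeight ρ ψ w x)) ≤
        ENNReal.ofReal (Real.exp (w * t)) *
          ⨆ x : X, ENNReal.ofReal (|valOf f x| / tildeWeight ρ ψ w x)) ∧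
    (∀ (t : ℝ≥0) (x : X), tildeWeight ρ ψ w (ψ t x) ≤ Real.exp (w * t) * tildeWeight ρ ψ w x) := by
  have hMpos : (0:ℝ) < M := lt_of_lt_of_le one_pos hM
  have key : ∀ (t : ℝ≥0) (x : X), ρ (ψ t x) ≤ M * Real.exp (w * t) * ρ x :=
    key_growth hρ ψ P htrans M w hM hgb
  -- each term of the sup is bounded by M ρ x
  have hterm : ∀ (x : X) (t : ℝ≥0), Real.exp (-(w * t)) * ρ (ψ t x) ≤ M * ρ x := by
    intro x t
    have h1 := key t x
    have h2 : Real.exp (-(w * t)) * ρ (ψ t x) ≤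
        Real.exp (-(w * t)) * (M * Real.exp (w * t) * ρ x) :=
      mul_le_mul_of_nonneg_left h1 (Real.exp_pos _).le
    have h3 : Real.exp (-(w * t)) * Real.exp (w * t) = 1 := by
      rw [← Real.exp_add]; simp
    calc Real.exp (-(w * t)) * ρ (ψ t x) ≤
          Real.exp (-(w * t)) * (M * Real.exp (w * t) * ρ x) := h2
      _ = (Real.exp (-(w * t)) * Real.exp (w * t)) * (M * ρ x) := by ring
      _ = M * ρ x := by rw [h3, one_mul]
  have hbdd : ∀ x : X, BddAbove (Set.range fun t : ℝ≥0 => Real.exp (-(w * t)) * ρ (ψ t x)) := by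
    intro x
    exact ⟨M * ρ x, by rintro r ⟨t, rfl⟩; exact hterm x t⟩
  have hle_tilde : ∀ x : X, ρ x ≤ tildeWeight ρ ψ w x := by
    intro x
    have h0 : Real.exp (-(w * (0:ℝ≥0))) * ρ (ψ 0 x) = ρ x := by
      simp [hψ0]
    calc ρ x = Real.exp (-(w * (0:ℝ≥0))) * ρ (ψ 0 x) := h0.symm
      _ ≤ tildeWeight ρ ψ w x := le_ciSup (hbdd x) 0
  have htilde_le : ∀ x : X, tildeWeight ρ ψ w x ≤ M * ρ x := by
    intro x
    exact ciSup_le fun t => hterm x t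
  have htildepos : ∀ x, 0 < tildeWeight ρ ψ w x := fun x =>
    lt_of_lt_of_le (hρ.pos x) (hle_tilde x)
  -- (iv)
  have hiv : ∀ (t : ℝ≥0) (x : X),
      tildeWeight ρ ψ w (ψ t x) ≤ Real.exp (w * t) * tildeWeight ρ ψ w x := by
    intro t x
    apply ciSup_le
    intro s
    have hcomp : ψ s (ψ t x) = ψ (s + t) x := by
      rw [hψsg s t]; rfl
    have hcast : ((s + t : ℝ≥0) : ℝ) = (s : ℝ) + (t : ℝ) := by push_cast; ring
    have hexp : Real.exp (-(w * s)) =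
        Real.exp (w * t) * Real.exp (-(w * ((s + t : ℝ≥0) : ℝ))) := by
      rw [← Real.exp_add, hcast]; ring_nf
    calc Real.exp (-(w * s)) * ρ (ψ s (ψ t x))
        = Real.exp (w * t) * (Real.exp (-(w * ((s + t : ℝ≥0) : ℝ))) * ρ (ψ (s + t) x)) := by
          rw [hcomp, hexp]; ring
      _ ≤ Real.exp (w * t) * tildeWeight ρ ψ w x := by
          apply mul_le_mul_of_nonneg_left _ (Real.exp_pos _).le
          exact le_ciSup (hbdd x) (s + t)
  refine ⟨?_, fun x => ⟨hle_tilde x, htilde_le x⟩, ?_, hiv⟩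
  · -- admissibility
    constructor
    · exact htildepos
    · intro R hR
      have hsub : {x | tildeWeight ρ ψ w x ≤ R} ⊆ {x | ρ x ≤ R} := fun x hx =>
        le_trans (hle_tilde x) hx
      have hclosed : IsClosed {x | tildeWeight ρ ψ w x ≤ R} := by
        have heq : {x | tildeWeight ρ ψ w x ≤ R} =
            ⋂ t : ℝ≥0, (ψ t) ⁻¹' {y | ρ y ≤ R / Real.exp (-(w * t))} := by
          ext x
          simp only [mem_setOf_eq, mem_iInter, mem_preimage]
          rw [tildeWeight, ciSup_le_iff (hbdd x)]
          constructor
          · intro h t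
            rw [le_div_iff₀ (Real.exp_pos _)]
            calc ρ (ψ t x) * Real.exp (-(w * t)) =
                Real.exp (-(w * t)) * ρ (ψ t x) := by ring
              _ ≤ R := h t
          · intro h t
            have := h t
            rw [le_div_iff₀ (Real.exp_pos _)] at this
            calc Real.exp (-(w * t)) * ρ (ψ t x) =
                ρ (ψ t x) * Real.exp (-(w * t)) := by ring
              _ ≤ R := this
        rw [heq]
        apply isClosed_iInter
        intro t
        apply IsClosed.preimage (hψc t)
        exact ((hρ.isCompact_sublevel _ (div_pos hR (Real.exp_pos _))).isClosed)
      exact (hρ.isCompact_sublevel R hR).of_isClosed_subset hclosed hsub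
    · intro R hR
      exact (hρ.isSeparable_sublevel R hR).mono fun x hx => le_trans (hle_tilde x) hx
  · -- (iii)
    intro t f
    apply iSup_le
    intro x
    have h1 : |valOf (P t f) x| = |valOf f (ψ t x)| := by rw [htrans t f x]
    have h2 : |valOf f (ψ t x)| / tildeWeight ρ ψ w x ≤
        Real.exp (w * t) * (|valOf f (ψ t x)| / tildeWeight ρ ψ w (ψ t x)) := by
      have hA := htildepos x
      have hBp := htildepos (ψ t x)
      have h3 : Real.exp (w * t) * (|valOf f (ψ t x)| / tildeWeight ρ ψ w (ψ t x)) =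
          (Real.exp (w * t) * |valOf f (ψ t x)|) / tildeWeight ρ ψ w (ψ t x) :=
        (mul_div_assoc _ _ _).symm
      rw [h3, div_le_div_iff₀ hA hBp]
      nlinarith [mul_le_mul_of_nonneg_left (hiv t x) (abs_nonneg (valOf f (ψ t x)))]
    calc ENNReal.ofReal (|valOf (P t f) x| / tildeWeight ρ ψ w x)
        ≤ ENNReal.ofReal (Real.exp (w * t) *
            (|valOf f (ψ t x)| / tildeWeight ρ ψ w (ψ t x))) := by
          apply ENNReal.ofReal_le_ofReal
          rw [h1]; exact h2
      _ = ENNReal.ofReal (Real.exp (w * t)) *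
            ENNReal.ofReal (|valOf f (ψ t x)| / tildeWeight ρ ψ w (ψ t x)) :=
          ENNReal.ofReal_mul (Real.exp_pos _).le
      _ ≤ ENNReal.ofReal (Real.exp (w * t)) *
            ⨆ y : X, ENNReal.ofReal (|valOf f y| / tildeWeight ρ ψ w y) := by
          apply mul_le_mul_right
          exact le_iSup (fun y => ENNReal.ofReal (|valOf f y| / tildeWeight ρ ψ w y)) (ψ t x)

end
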